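/- Let Ω be a finite probability space with expectation E, and for each ω ∈ Ω let σ_ω be a density matrix and Π_ω an orthogonal projection on a fixed finite-dimensional complex Hilbert space. Let P be an orthogonal projection and Q a positive semidefinite operator with Q ≤ P and QP = PQ, and set Q' := P − (P − Q)^{1/2}. Suppose 0 < η < ε/3, E[ Tr( σ_ω (P − Q') Π_ω (P − Q') ) ] ≤ 1 − ε, and E[ Tr( σ_ω P Π_ω P ) ] > 1 − η. Then E[ Tr( σ_ω Q ) ] ≥ η². -/

import Mathlib

open Matrix Filter
open scoped BigOperators ComplexOrder

noncomputable section

/-- Operators on the `n`-fold tensor power of a `d`-dimensional Hilbert space. -/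
abbrev MatPow (d n : ℕ) := Matrix (Fin n → Fin d) (Fin n → Fin d) ℂ

/-- A density matrix: positive semidefinite with unit trace. -/
def IsDensity {m : Type*} [Fintype m] (ρ : Matrix m m ℂ) : Prop :=
  ρ.PosSemidef ∧ ρ.trace = 1

/-- Loewner order `A ≤ B`. -/
def Loewner {m : Type*} [Fintype m] (A B : Matrix m m ℂ) : Prop := (B - A).PosSemidef

/-- An orthogonal projection. -/
def IsProjection {m : Type*} [Fintype m] (P : Matrix m m ℂ) : Prop :=
  P.IsHermitian ∧ P * P = P

/-- Positive semidefinite square root (zero on non-PSD input). -/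
def psqrt {m : Type*} [Fintype m] [DecidableEq m] (A : Matrix m m ℂ) : Matrix m m ℂ :=
  letI := Classical.propDecidable A.PosSemidef
  if h : A.PosSemidef then
    (h.1.eigenvectorUnitary : Matrix m m ℂ) * diagonal ((↑) ∘ (√·) ∘ h.1.eigenvalues) *
      (star h.1.eigenvectorUnitary : Matrix m m ℂ)
  else 0

/-- Fidelity `F(A,B) = Tr √(√A B √A)` of positive semidefinite operators. -/
def fidelity {m : Type*} [Fintype m] [DecidableEq m] (A B : Matrix m m ℂ) : ℝ :=
  ((psqrt (psqrt A * B * psqrt A)).trace).re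

/-- The trace norm `Tr |A| = Tr √(Aᴴ A)`. -/
def traceNorm {m : Type*} [Fintype m] [DecidableEq m] (A : Matrix m m ℂ) : ℝ :=
  ((psqrt (Aᴴ * A)).trace).re

/-- Von Neumann entropy `S(ρ) = -Tr(ρ log₂ ρ)` (via eigenvalues, base-2 logarithm). -/
def vnEntropy {m : Type*} [Fintype m] [DecidableEq m] (ρ : Matrix m m ℂ) : ℝ :=
  if h : ρ.IsHermitian then -∑ i, h.eigenvalues i * Real.logb 2 (h.eigenvalues i) else 0

/-- Linear maps from operators on an `a`-dimensional space to operators on a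
`b`-dimensional space. -/
abbrev QChannelMap (a b : ℕ) := Matrix (Fin a) (Fin a) ℂ →ₗ[ℂ] Matrix (Fin b) (Fin b) ℂ

/-- The Choi matrix of a linear map. -/
def choiMatrix {a b : ℕ} (Φ : QChannelMap a b) : Matrix (Fin a × Fin b) (Fin a × Fin b) ℂ :=
  Matrix.of fun p p' => Φ (Matrix.single p.1 p'.1 1) p.2 p'.2

/-- Completely positive (positive semidefinite Choi matrix) and trace preserving. -/
def IsCPTP {a b : ℕ} (Φ : QChannelMap a b) : Prop :=
  (choiMatrix Φ).PosSemidef ∧ ∀ ρ : Matrix (Fin a) (Fin a) ℂ, (Φ ρ).trace = ρ.trace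

/-- The `n`-fold tensor product map `Φs 0 ⊗ ⋯ ⊗ Φs (n-1)`. -/
def tensChan {a b : ℕ} (n : ℕ) (Φs : Fin n → QChannelMap a b) (ρ : MatPow a n) :
    MatPow b n :=
  Matrix.of fun y y' => ∑ x : Fin n → Fin a, ∑ x' : Fin n → Fin a,
    ρ x x' * ∏ k, Φs k (Matrix.single (x k) (x' k) 1) (y k) (y' k)

/-- The Markov weight `γ_{i₁} q_{i₁ i₂} ⋯ q_{i_{n-1} i_n}` of a trajectory. -/
def chainWt {I : Type*} (q : I → I → ℝ) (γ : I → ℝ) {n : ℕ} (i : Fin n → I) : ℝ :=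
  ∏ k : Fin n, if k.val = 0 then γ (i k)
    else q (i ⟨k.val - 1, Nat.lt_of_le_of_lt (Nat.pred_le _) k.isLt⟩) (i k)

/-- The memory channel `Φ^{(n)}` with Markovian correlated noise. -/
def memChan {I : Type*} [Fintype I] {a b : ℕ} (q : I → I → ℝ) (γ : I → ℝ)
    (Φ : I → QChannelMap a b) (n : ℕ) (ρ : MatPow a n) : MatPow b n :=
  ∑ i : Fin n → I, chainWt q γ i • tensChan n (fun k => Φ (i k)) ρ

/-- `γ_C = ∑_{i ∈ C} γ_i`. -/
def gammaC {I : Type*} [Fintype I] [DecidableEq I] (γ : I → ℝ) (C : Finset I) : ℝ :=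
  ∑ i ∈ C, γ i

/-- The channel `Φ_C^{(n)}` restricted to the class `C`. -/
def classChan {I : Type*} [Fintype I] [DecidableEq I] {a b : ℕ} (q : I → I → ℝ)
    (γ : I → ℝ) (Φ : I → QChannelMap a b) (C : Finset I) (n : ℕ) (ρ : MatPow a n) :
    MatPow b n :=
  (gammaC γ C)⁻¹ • ∑ i : Fin n → {x // x ∈ C},
    chainWt q γ (fun k => (i k : I)) • tensChan n (fun k => Φ (i k : I)) ρ

/-- The transition matrix of the Markov chain. -/
def qMatrix {I : Type*} [Fintype I] (q : I → I → ℝ) : Matrix I I ℝ := Matrix.of q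

/-- `j` is accessible from `i`. -/
def Accessible {I : Type*} [Fintype I] [DecidableEq I] (q : I → I → ℝ) (i j : I) : Prop :=
  ∃ n : ℕ, 0 < (qMatrix q ^ n) i j

/-- `i` and `j` communicate. -/
def Communicates {I : Type*} [Fintype I] [DecidableEq I] (q : I → I → ℝ) (i j : I) : Prop :=
  Accessible q i j ∧ Accessible q j i

/-- `C` is a communicating class. -/
def IsCommClass {I : Type*} [Fintype I] [DecidableEq I] (q : I → I → ℝ) (C : Finset I) :
    Prop :=
  ∃ i : I, ∀ j, j ∈ C ↔ Communicates q i j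

/-- The class `C` is aperiodic: for each of its states, the gcd of the return
times is `1`. -/
def IsAperiodicClass {I : Type*} [Fintype I] [DecidableEq I] (q : I → I → ℝ)
    (C : Finset I) : Prop :=
  ∀ i ∈ C, ∀ d : ℕ, (∀ n : ℕ, 0 < n → 0 < (qMatrix q ^ n) i i → d ∣ n) → d = 1

/-- The class `C` is a (deterministic) periodic cycle `i₀ → i₁ → ⋯ → i_{L-1} → i₀` of
period `L ≥ 2`, enumerated by the `L`-periodic function `e : ℕ → I`. -/
def IsPeriodicCycle {I : Type*} [Fintype I] [DecidableEq I] (q : I → I → ℝ)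
    (C : Finset I) (L : ℕ) (e : ℕ → I) : Prop :=
  2 ≤ L ∧ (∀ k, e (k + L) = e k) ∧ (∀ j, j ∈ C ↔ ∃ k < L, e k = j) ∧
    (∀ k k', k < L → k' < L → e k = e k' → k = k') ∧ ∀ k, q (e k) (e (k + 1)) = 1

/-- The branch channel `Φ_{C,i_k}^{(n)} = Φ_{i_k} ⊗ Φ_{i_{k+1}} ⊗ ⋯ ⊗ Φ_{i_{k+n-1}}`
of a periodic cycle enumerated by `e`, started at position `k`. -/
def cycleChan {I : Type*} {a b : ℕ} (Φ : I → QChannelMap a b) (e : ℕ → I) (k n : ℕ)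
    (ρ : MatPow a n) : MatPow b n :=
  tensChan n (fun r => Φ (e (k + r.val))) ρ

/-- A finite ensemble of density matrices. -/
def IsEnsemble {m : Type*} [Fintype m] {J : ℕ} (p : Fin J → ℝ)
    (ρ : Fin J → Matrix m m ℂ) : Prop :=
  (∀ j, 0 ≤ p j) ∧ ∑ j, p j = 1 ∧ ∀ j, IsDensity (ρ j)

/-- Mean Holevo quantity of an ensemble for an aperiodic class `C`. -/
def holevoAper {I : Type*} [Fintype I] [DecidableEq I] {a b : ℕ} (q : I → I → ℝ)
    (γ : I → ℝ) (Φ : I → QChannelMap a b) (C : Finset I) (n : ℕ) {J : ℕ}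
    (p : Fin J → ℝ) (ρ : Fin J → MatPow a n) : ℝ :=
  (1 / (n : ℝ)) * (vnEntropy (∑ j, p j • classChan q γ Φ C n (ρ j)) -
    ∑ j, p j * vnEntropy (classChan q γ Φ C n (ρ j)))

/-- Mean Holevo quantity of an ensemble for a periodic cycle of period `L`
enumerated by `e`. -/
def holevoCyc {I : Type*} {a b : ℕ} (Φ : I → QChannelMap a b) (e : ℕ → I) (L n : ℕ)
    {J : ℕ} (p : Fin J → ℝ) (ρ : Fin J → MatPow a n) : ℝ :=
  (1 / ((n : ℝ) * L)) * ∑ k : Fin L,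
    (vnEntropy (cycleChan Φ e k.val n (∑ j, p j • ρ j)) -
      ∑ j, p j * vnEntropy (cycleChan Φ e k.val n (ρ j)))

/-- The mean Holevo quantity `χ̄_C^{(n)}` of a communicating class. -/
def chibarC {I : Type*} [Fintype I] [DecidableEq I] {a b : ℕ} (q : I → I → ℝ)
    (γ : I → ℝ) (Φ : I → QChannelMap a b) (C : Finset I) (n : ℕ) {J : ℕ}
    (p : Fin J → ℝ) (ρ : Fin J → MatPow a n) : ℝ :=
  letI := Classical.propDecidable (∃ L e, IsPeriodicCycle q C L e)
  if h : ∃ L e, IsPeriodicCycle q C L e then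
    holevoCyc Φ h.choose_spec.choose h.choose n p ρ
  else holevoAper q γ Φ C n p ρ

/-- `χ̄_n`: the supremum over ensembles of the minimum over communicating classes
(of positive weight) of the mean Holevo quantities. -/
def chibar {I : Type*} [Fintype I] [DecidableEq I] {a b : ℕ} (q : I → I → ℝ)
    (γ : I → ℝ) (Φ : I → QChannelMap a b) (n : ℕ) : ℝ :=
  sSup {x : ℝ | ∃ (J : ℕ) (p : Fin J → ℝ) (ρ : Fin J → MatPow a n),
    IsEnsemble p ρ ∧
    x = sInf {y : ℝ | ∃ C : Finset I, IsCommClass q C ∧ 0 < gammaC γ C ∧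
      y = chibarC q γ Φ C n p ρ}}

/-- The `n`-use Holevo quantity of the memory channel. -/
def chiN {I : Type*} [Fintype I] {a b : ℕ} (q : I → I → ℝ) (γ : I → ℝ)
    (Φ : I → QChannelMap a b) (n : ℕ) : ℝ :=
  sSup {x : ℝ | ∃ (J : ℕ) (p : Fin J → ℝ) (ρ : Fin J → MatPow a n),
    IsEnsemble p ρ ∧
    x = (1 / (n : ℝ)) * (vnEntropy (∑ j, p j • memChan q γ Φ n (ρ j)) -
      ∑ j, p j * vnEntropy (memChan q γ Φ n (ρ j)))}

/-- A code: densities as codewords and a sub-POVM as decoder. -/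
def IsCode {a b : ℕ} (n N : ℕ) (ρ : Fin N → MatPow a n) (E : Fin N → MatPow b n) : Prop :=
  (∀ k, IsDensity (ρ k)) ∧ (∀ k, (E k).PosSemidef) ∧ Loewner (∑ k, E k) 1

/-- Average probability of error of a code for the memory channel. -/
def avgErr {I : Type*} [Fintype I] {a b : ℕ} (q : I → I → ℝ) (γ : I → ℝ)
    (Φ : I → QChannelMap a b) (n N : ℕ) (ρ : Fin N → MatPow a n)
    (E : Fin N → MatPow b n) : ℝ :=
  (1 / (N : ℝ)) * ∑ k, (1 - ((memChan q γ Φ n (ρ k) * E k).trace).re)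

/-- `R` is an achievable rate for the memory channel. -/
def AchievableRate {I : Type*} [Fintype I] {a b : ℕ} (q : I → I → ℝ) (γ : I → ℝ)
    (Φ : I → QChannelMap a b) (R : ℝ) : Prop :=
  0 ≤ R ∧ ∃ (N : ℕ → ℕ) (ρ : ∀ n, Fin (N n) → MatPow a n)
    (E : ∀ n, Fin (N n) → MatPow b n),
    (∀ n, IsCode n (N n) (ρ n) (E n)) ∧
    (∀ n : ℕ, (2 : ℝ) ^ ((n : ℝ) * R) ≤ (N n : ℝ)) ∧
    Tendsto (fun n => avgErr q γ Φ n (N n) (ρ n) (E n)) atTop (nhds 0)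

/-- The classical capacity: the supremum of achievable rates. -/
def capacity {I : Type*} [Fintype I] {a b : ℕ} (q : I → I → ℝ) (γ : I → ℝ)
    (Φ : I → QChannelMap a b) : ℝ :=
  sSup {R : ℝ | AchievableRate q γ Φ R}

/-- A stochastic matrix. -/
def IsStochastic {I : Type*} [Fintype I] (q : I → I → ℝ) : Prop :=
  (∀ i j, 0 ≤ q i j) ∧ ∀ i, ∑ j, q i j = 1

/-- An invariant probability distribution. -/
def IsInvariantDist {I : Type*} [Fintype I] (q : I → I → ℝ) (γ : I → ℝ) : Prop :=
  (∀ i, 0 ≤ γ i) ∧ ∑ i, γ i = 1 ∧ ∀ j, γ j = ∑ i, γ i * q i j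

/-- The chain is irreducible. -/
def IsIrreducibleChain {I : Type*} [Fintype I] [DecidableEq I] (q : I → I → ℝ) : Prop :=
  ∀ i j, Accessible q i j

/-- The chain is aperiodic. -/
def IsAperiodicChain {I : Type*} [Fintype I] [DecidableEq I] (q : I → I → ℝ) : Prop :=
  ∀ i : I, ∀ d : ℕ, (∀ n : ℕ, 0 < n → 0 < (qMatrix q ^ n) i i → d ∣ n) → d = 1

/-- The index of the `s`-th site of the `r`-th block. -/
def blockIdx {m l : ℕ} (r : Fin m) (s : Fin l) : Fin (m * l) :=
  ⟨r.val * l + s.val, by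
    have h1 := r.isLt
    have h2 := s.isLt
    calc r.val * l + s.val < r.val * l + l := Nat.add_lt_add_left h2 _
      _ = (r.val + 1) * l := by ring
      _ ≤ m * l := Nat.mul_le_mul_right _ h1⟩

/-- The tensor product `ρ 0 ⊗ ρ 1 ⊗ ⋯ ⊗ ρ (m-1)` of `m` states on `l` sites each. -/
def kronFam {d l : ℕ} {m : ℕ} (ρ : Fin m → MatPow d l) : MatPow d (m * l) :=
  Matrix.of fun x x' =>
    ∏ r : Fin m, ρ r (fun s => x (blockIdx r s)) (fun s => x' (blockIdx r s))

/-- The `m`-fold tensor power `ρ^{⊗ m}` of a state on `l` sites. -/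
def kronPow {d l : ℕ} (m : ℕ) (ρ : MatPow d l) : MatPow d (m * l) := kronFam fun _ => ρ

/-- The tensor product `τ 0 ⊗ ⋯ ⊗ τ (n-1)` of single-site states. -/
def kronSites {d n : ℕ} (τ : Fin n → Matrix (Fin d) (Fin d) ℂ) : MatPow d n :=
  Matrix.of fun x x' => ∏ r, τ r (x r) (x' r)

/-- The tensor product of a state on `a` sites and a state on `b` sites. -/
def kron2 {d a b : ℕ} (A : MatPow d a) (B : MatPow d b) : MatPow d (a + b) :=
  Matrix.of fun x x' =>
    A (fun s => x (Fin.castAdd b s)) (fun s => x' (Fin.castAdd b s)) *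
      B (fun t => x (Fin.natAdd a t)) (fun t => x' (Fin.natAdd a t))

/-- `A ⊗ 1 ⊗ B` on `(2m+k)·l` sites, where `A`, `B` act on the first and last `m·l`
sites respectively and the identity acts on the middle `k·l` sites. -/
def threeBlock {d : ℕ} (m k l : ℕ) (A B : MatPow d (m * l)) : MatPow d ((2 * m + k) * l) :=
  Matrix.of fun y y' =>
    A (fun s => y ⟨s.val, by
          have hs := s.isLt
          have h : m * l ≤ (2 * m + k) * l := Nat.mul_le_mul_right _ (by omega)
          omega⟩)
      (fun s => y' ⟨s.val, by
          have hs := s.isLt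
          have h : m * l ≤ (2 * m + k) * l := Nat.mul_le_mul_right _ (by omega)
          omega⟩) *
    (if (fun t : Fin (k * l) => y ⟨m * l + t.val, by
            have ht := t.isLt
            have h : (m + k) * l ≤ (2 * m + k) * l := Nat.mul_le_mul_right _ (by omega)
            have e : (m + k) * l = m * l + k * l := Nat.add_mul _ _ _
            omega⟩) =
        (fun t : Fin (k * l) => y' ⟨m * l + t.val, by
            have ht := t.isLt
            have h : (m + k) * l ≤ (2 * m + k) * l := Nat.mul_le_mul_right _ (by omega)
            have e : (m + k) * l = m * l + k * l := Nat.add_mul _ _ _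
            omega⟩)
      then (1 : ℂ) else 0) *
    B (fun s => y ⟨(m + k) * l + s.val, by
          have hs := s.isLt
          have e : (2 * m + k) * l = (m + k) * l + m * l := by
            rw [show 2 * m + k = (m + k) + m by omega, Nat.add_mul]
          omega⟩)
      (fun s => y' ⟨(m + k) * l + s.val, by
          have hs := s.isLt
          have e : (2 * m + k) * l = (m + k) * l + m * l := by
            rw [show 2 * m + k = (m + k) + m by omega, Nat.add_mul]
          omega⟩)


namespace Matrix.PosSemidef

def sqrt {m : Type*} [Fintype m] [DecidableEq m] {A : Matrix m m ℂ} (h : A.PosSemidef) :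
    Matrix m m ℂ :=
  (h.1.eigenvectorUnitary : Matrix m m ℂ) * diagonal ((↑) ∘ (√·) ∘ h.1.eigenvalues) *
    (star h.1.eigenvectorUnitary : Matrix m m ℂ)

lemma posSemidef_sqrt {m : Type*} [Fintype m] [DecidableEq m] {A : Matrix m m ℂ}
    (hA : A.PosSemidef) : hA.sqrt.PosSemidef := by
  have hD : (diagonal ((↑) ∘ (√·) ∘ hA.1.eigenvalues : m → ℂ)).PosSemidef :=
    posSemidef_diagonal_iff.mpr fun i => Complex.zero_le_real.mpr (Real.sqrt_nonneg _)
  have := hD.mul_mul_conjTranspose_same (hA.1.eigenvectorUnitary : Matrix m m ℂ)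
  unfold sqrt
  rwa [star_eq_conjTranspose]

lemma sqrt_mul_self {m : Type*} [Fintype m] [DecidableEq m] {A : Matrix m m ℂ}
    (hA : A.PosSemidef) : hA.sqrt * hA.sqrt = A := by
  have hU : (star hA.1.eigenvectorUnitary : Matrix m m ℂ) *
      (hA.1.eigenvectorUnitary : Matrix m m ℂ) = 1 := Unitary.coe_star_mul_self _
  have hD : diagonal ((↑) ∘ (√·) ∘ hA.1.eigenvalues : m → ℂ) *
      diagonal ((↑) ∘ (√·) ∘ hA.1.eigenvalues) = diagonal (RCLike.ofReal ∘ hA.1.eigenvalues) := by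
    rw [diagonal_mul_diagonal]
    congr 1
    funext i
    simp only [Function.comp_apply]
    rw [← Complex.ofReal_mul, Real.mul_self_sqrt (hA.eigenvalues_nonneg i)]
    rfl
  unfold sqrt
  conv_rhs => rw [hA.1.spectral_theorem, Unitary.conjStarAlgAut_apply]
  rw [← hD]
  calc _ = (hA.1.eigenvectorUnitary : Matrix m m ℂ) *
        diagonal ((↑) ∘ (√·) ∘ hA.1.eigenvalues : m → ℂ) *
        ((star hA.1.eigenvectorUnitary : Matrix m m ℂ) * (hA.1.eigenvectorUnitary : Matrix m m ℂ)) *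
        diagonal ((↑) ∘ (√·) ∘ hA.1.eigenvalues : m → ℂ) *
        (star hA.1.eigenvectorUnitary : Matrix m m ℂ) := by simp only [Matrix.mul_assoc]
    _ = _ := by rw [hU, Matrix.mul_one]; simp only [Matrix.mul_assoc]

end Matrix.PosSemidef

namespace MsAux
open Matrix
variable {m : Type*} [Fintype m] [DecidableEq m]

omit [DecidableEq m] in
lemma psd_diag_nonneg {M : Matrix m m ℂ} (hM : M.PosSemidef) (i : m) : 0 ≤ M i i := by
  classical
  simpa [Matrix.mulVec_single, dotProduct, Pi.single_apply] using hM.dotProduct_mulVec_nonneg (Pi.single i 1)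

omit [DecidableEq m] in
lemma psd_trace_nonneg {M : Matrix m m ℂ} (hM : M.PosSemidef) : 0 ≤ M.trace :=
  Finset.sum_nonneg fun i _ => psd_diag_nonneg hM i

omit [DecidableEq m] in
lemma psd_trace_re_nonneg {M : Matrix m m ℂ} (hM : M.PosSemidef) : 0 ≤ M.trace.re :=
  (Complex.le_def.mp (psd_trace_nonneg hM)).1

lemma trace_mul_psd_re_nonneg {A B : Matrix m m ℂ} (hA : A.PosSemidef) (hB : B.PosSemidef) :
    0 ≤ ((A * B).trace).re := by
  have h1 : A * B = hA.sqrt * (hA.sqrt * B) := by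
    rw [← Matrix.mul_assoc, hA.sqrt_mul_self]
  have h2 : ((A * B).trace) = ((hA.sqrt * B * hA.sqrt).trace) := by
    rw [h1, Matrix.trace_mul_comm, Matrix.mul_assoc]
  rw [h2]
  have h3 : (hA.sqrt * B * hA.sqrt).PosSemidef := by
    have := hB.conjTranspose_mul_mul_same (B := hA.sqrt)
    rwa [hA.posSemidef_sqrt.1.eq] at this
  exact psd_trace_re_nonneg h3

lemma psqrt_eq {A : Matrix m m ℂ} (hA : A.PosSemidef) : psqrt A = hA.sqrt := by
  rw [psqrt]
  exact dif_pos hA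

omit [DecidableEq m] in
lemma proj_psd {P : Matrix m m ℂ} (h : IsProjection P) : P.PosSemidef := by
  have : P = Pᴴ * P := by rw [h.1.eq, h.2]
  rw [this]
  exact Matrix.posSemidef_conjTranspose_mul_self P

lemma proj_one_sub {P : Matrix m m ℂ} (h : IsProjection P) : IsProjection (1 - P) := by
  constructor
  · have := h.1.eq
    unfold Matrix.IsHermitian
    simp [Matrix.conjTranspose_sub, this]
  · have := h.2
    rw [Matrix.mul_sub, Matrix.sub_mul, Matrix.sub_mul, this]
    simp

lemma mul_eq_zero_of_loewner_proj {P Q : Matrix m m ℂ} (hQ : Q.PosSemidef)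
    (hPQ : (P - Q).PosSemidef) (hP : IsProjection P) : Q * (1 - P) = 0 := by
  have hp0 : (1 - P) * P = 0 := by
    rw [Matrix.sub_mul, Matrix.one_mul, hP.2, sub_self]
  have h2 : (1 - P) * (P - Q) * (1 - P) = - ((1 - P) * Q * (1 - P)) := by
    have e1 : (1 - P) * (P - Q) = -((1 - P) * Q) := by
      rw [Matrix.mul_sub, hp0, zero_sub]
    rw [e1, Matrix.neg_mul]
  have hX : ((1 - P) * Q * (1 - P)).PosSemidef := by
    have := hQ.conjTranspose_mul_mul_same (B := (1 - P))
    rwa [(proj_one_sub hP).1.eq] at this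
  have h1 : ((1 - P) * (P - Q) * (1 - P)).PosSemidef := by
    have := hPQ.conjTranspose_mul_mul_same (B := (1 - P))
    rwa [(proj_one_sub hP).1.eq] at this
  have key : ∀ v : m → ℂ, (Q * (1 - P)) *ᵥ v = 0 := by
    intro v
    set w : m → ℂ := (1 - P) *ᵥ v with hw
    have hdp : star v ⬝ᵥ ((1 - P) * Q * (1 - P)) *ᵥ v = star w ⬝ᵥ Q *ᵥ w := by
      rw [hw, Matrix.star_mulVec, (proj_one_sub hP).1.eq, ← Matrix.dotProduct_mulVec,
        Matrix.mulVec_mulVec, Matrix.mulVec_mulVec]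
    have hge : 0 ≤ star v ⬝ᵥ ((1 - P) * Q * (1 - P)) *ᵥ v := hX.dotProduct_mulVec_nonneg v
    have hle : star v ⬝ᵥ ((1 - P) * Q * (1 - P)) *ᵥ v ≤ 0 := by
      have := h1.dotProduct_mulVec_nonneg v
      rw [h2, Matrix.neg_mulVec, dotProduct_neg, neg_nonneg] at this
      exact this
    have h3 : star w ⬝ᵥ Q *ᵥ w = 0 := by rw [← hdp]; exact le_antisymm hle hge
    have h4 : Q *ᵥ w = 0 := (hQ.dotProduct_mulVec_zero_iff w).mp h3
    rw [← Matrix.mulVec_mulVec, ← hw, h4]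
  ext i j
  have := congrFun (key (Pi.single j 1)) i
  rw [Matrix.mulVec_single] at this
  simpa using this

def ev (v : m → ℂ) : EuclideanSpace ℂ m := (WithLp.equiv 2 _).symm v

omit [DecidableEq m] in
lemma inner_ev (v w : m → ℂ) : (inner ℂ (ev v) (ev w) : ℂ) = star v ⬝ᵥ w := by
  simp [ev, PiLp.inner_apply, dotProduct, RCLike.inner_apply, mul_comm]

omit [DecidableEq m] in
lemma dot_self_re (u : m → ℂ) : (star u ⬝ᵥ u).re = ‖ev u‖ ^ 2 := by
  rw [← inner_ev, ← RCLike.re_to_complex]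
  exact inner_self_eq_norm_sq (ev u)

omit [DecidableEq m] in
lemma dot_self_im (u : m → ℂ) : (star u ⬝ᵥ u).im = 0 := by
  rw [← inner_ev, ← RCLike.im_to_complex]
  exact inner_self_im (𝕜 := ℂ) (ev u)

lemma psd_le_one {S : Matrix m m ℂ} (hS : S.PosSemidef) (h : (1 - S * S).PosSemidef) :
    (1 - S).PosSemidef := by
  refine Matrix.PosSemidef.of_dotProduct_mulVec_nonneg ?_ ?_
  · have := hS.1.eq
    unfold Matrix.IsHermitian
    simp [Matrix.conjTranspose_sub, this]
  · intro v
    set w : m → ℂ := S *ᵥ v with hw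
    have hc : (0:ℂ) ≤ star v ⬝ᵥ w := hS.dotProduct_mulVec_nonneg v
    have hd : star v ⬝ᵥ ((S * S) *ᵥ v) = star w ⬝ᵥ w := by
      rw [hw, Matrix.star_mulVec, ← Matrix.mulVec_mulVec, ← Matrix.dotProduct_mulVec, hS.1.eq]
    have hnd : (0:ℂ) ≤ star v ⬝ᵥ v - star w ⬝ᵥ w := by
      have := h.dotProduct_mulVec_nonneg v
      rwa [Matrix.sub_mulVec, Matrix.one_mulVec, dotProduct_sub, hd] at this
    have hwv : ‖ev w‖ ≤ ‖ev v‖ := by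
      have h2 : ‖ev w‖ ^ 2 ≤ ‖ev v‖ ^ 2 := by
        have := (Complex.le_def.mp hnd).1
        simpa [Complex.sub_re, dot_self_re, sub_nonneg] using this
      have := Real.sqrt_le_sqrt h2
      rwa [Real.sqrt_sq (norm_nonneg _), Real.sqrt_sq (norm_nonneg _)] at this
    have hcs : (star v ⬝ᵥ w).re ≤ ‖ev v‖ * ‖ev w‖ := by
      calc (star v ⬝ᵥ w).re ≤ ‖star v ⬝ᵥ w‖ := Complex.re_le_norm _
        _ = ‖(inner ℂ (ev v) (ev w) : ℂ)‖ := by rw [inner_ev]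
        _ ≤ ‖ev v‖ * ‖ev w‖ := norm_inner_le_norm _ _
    have him : (star v ⬝ᵥ w).im = 0 := (Complex.le_def.mp hc).2.symm
    rw [Matrix.sub_mulVec, Matrix.one_mulVec, dotProduct_sub, Complex.le_def]
    refine ⟨?_, ?_⟩
    · simp only [Complex.sub_re, Complex.zero_re, sub_nonneg, dot_self_re]
      calc (star v ⬝ᵥ w).re ≤ ‖ev v‖ * ‖ev w‖ := hcs
        _ ≤ ‖ev v‖ * ‖ev v‖ := mul_le_mul_of_nonneg_left hwv (norm_nonneg _)
        _ = ‖ev v‖ ^ 2 := (sq ‖ev v‖).symm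
    · simp [Complex.sub_im, ← hw, him, dot_self_im]

def emb (M : Matrix m m ℂ) : EuclideanSpace ℂ (m × m) :=
  (WithLp.equiv 2 _).symm (fun p => M p.1 p.2)

omit [Fintype m] [DecidableEq m] in
lemma emb_add (A B : Matrix m m ℂ) : emb (A + B) = emb A + emb B := rfl

omit [DecidableEq m] in
lemma norm_emb_sq (M : Matrix m m ℂ) : ‖emb M‖ ^ 2 = ((Mᴴ * M).trace).re := by
  have h1 : ‖emb M‖ ^ 2 = ∑ p : m × m, ‖M p.1 p.2‖ ^ 2 := by
    rw [EuclideanSpace.norm_eq, Real.sq_sqrt]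
    · rfl
    · positivity
  have h2 : ((Mᴴ * M).trace).re = ∑ j : m, ∑ i : m, ‖M i j‖ ^ 2 := by
    rw [Matrix.trace, Complex.re_sum]
    apply Finset.sum_congr rfl
    intro j _
    simp only [Matrix.diag_apply, Matrix.mul_apply, Matrix.conjTranspose_apply]
    rw [Complex.re_sum]
    apply Finset.sum_congr rfl
    intro i _
    have : star (M i j) * M i j = ((Complex.normSq (M i j) : ℝ) : ℂ) := by
      rw [Complex.star_def, Complex.normSq_eq_conj_mul_self]
    rw [this, Complex.ofReal_re, ← Complex.sq_norm]
  rw [h1, h2, Fintype.sum_prod_type]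
  exact Finset.sum_comm

lemma norm_emb_proj_mul_le {Pj : Matrix m m ℂ} (hPj : IsProjection Pj) (M : Matrix m m ℂ) :
    ‖emb (Pj * M)‖ ≤ ‖emb M‖ := by
  have hsq : ‖emb (Pj * M)‖ ^ 2 ≤ ‖emb M‖ ^ 2 := by
    rw [norm_emb_sq, norm_emb_sq]
    have h1 : (Pj * M)ᴴ * (Pj * M) = Mᴴ * Pj * M := by
      rw [Matrix.conjTranspose_mul, hPj.1.eq]
      simp only [Matrix.mul_assoc]
      rw [← Matrix.mul_assoc Pj Pj M, hPj.2]
    have h2 : Mᴴ * M - Mᴴ * Pj * M = Mᴴ * (1 - Pj) * M := by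
      rw [Matrix.mul_sub, Matrix.mul_one, Matrix.sub_mul]
    have h3 : (Mᴴ * (1 - Pj) * M).PosSemidef :=
      (proj_psd (proj_one_sub hPj)).conjTranspose_mul_mul_same (B := M)
    have h4 : 0 ≤ ((Mᴴ * (1 - Pj) * M).trace).re := psd_trace_re_nonneg h3
    rw [← h2, Matrix.trace_sub] at h4
    simp only [Complex.sub_re] at h4
    rw [h1]
    linarith
  have := Real.sqrt_le_sqrt hsq
  rwa [Real.sqrt_sq (norm_nonneg _), Real.sqrt_sq (norm_nonneg _)] at this

lemma trace_form {σ : Matrix m m ℂ} (hσ : σ.PosSemidef) (M : Matrix m m ℂ) :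
    ((σ * (Mᴴ * M)).trace).re = ‖emb (M * hσ.sqrt)‖ ^ 2 := by
  rw [norm_emb_sq]
  have h1 : (M * hσ.sqrt)ᴴ * (M * hσ.sqrt) = hσ.sqrt * (Mᴴ * M) * hσ.sqrt := by
    rw [Matrix.conjTranspose_mul, hσ.posSemidef_sqrt.1.eq]
    simp only [Matrix.mul_assoc]
  rw [h1, Matrix.trace_mul_cycle, ← Matrix.mul_assoc, hσ.sqrt_mul_self, Matrix.mul_assoc]

omit [DecidableEq m] in
lemma sandwich_eq {Pj B : Matrix m m ℂ} (hPj : IsProjection Pj) (hB : Bᴴ = B) :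
    B * Pj * B = (Pj * B)ᴴ * (Pj * B) := by
  rw [Matrix.conjTranspose_mul, hB, hPj.1.eq]
  simp only [Matrix.mul_assoc]
  rw [← Matrix.mul_assoc Pj Pj B, hPj.2]

end MsAux

/-- The measurement-success estimate (Lemma 9 of the ergodic Feinstein argument). -/
theorem measurement_success_bound {d t : ℕ} (w : Fin t → ℝ)
    (hw : ∀ ω, 0 ≤ w ω) (hw1 : ∑ ω, w ω = 1)
    (σ : Fin t → Matrix (Fin d) (Fin d) ℂ) (hσ : ∀ ω, IsDensity (σ ω))
    (Pi : Fin t → Matrix (Fin d) (Fin d) ℂ) (hPi : ∀ ω, IsProjection (Pi ω))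
    (P Q : Matrix (Fin d) (Fin d) ℂ) (hP : IsProjection P) (hQ : Q.PosSemidef)
    (hQP : Loewner Q P) (hcomm : Q * P = P * Q)
    (ε η : ℝ) (hη : 0 < η) (hηε : η < ε / 3)
    (h1 : ∑ ω, w ω *
        ((σ ω * (psqrt (P - Q) * Pi ω * psqrt (P - Q))).trace).re ≤ 1 - ε)
    (h2 : 1 - η < ∑ ω, w ω * ((σ ω * (P * Pi ω * P)).trace).re) :
    η ^ 2 ≤ ∑ ω, w ω * ((σ ω * Q).trace).re := by
  classical
  open MsAux in
  have hA : (P - Q).PosSemidef := hQP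
  set S : Matrix (Fin d) (Fin d) ℂ := psqrt (P - Q) with hSdef
  have hSsq : S = hA.sqrt := MsAux.psqrt_eq hA
  have hS : S.PosSemidef := by rw [hSsq]; exact hA.posSemidef_sqrt
  have hSS : S * S = P - Q := by rw [hSsq]; exact hA.sqrt_mul_self
  -- absorption identities
  have hQ1P : Q * (1 - P) = 0 := MsAux.mul_eq_zero_of_loewner_proj hQ hA hP
  have hQP' : Q * P = Q := by
    have := hQ1P
    rw [Matrix.mul_sub, Matrix.mul_one] at this
    exact (sub_eq_zero.mp this).symm
  have hA1P : (P - Q) * (1 - P) = 0 := by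
    rw [Matrix.sub_mul, Matrix.mul_sub, Matrix.mul_sub, Matrix.mul_one, Matrix.mul_one,
      hP.2, hQP']
    abel
  have hM0 : S * (1 - P) = 0 := by
    have hz : (S * (1 - P))ᴴ * (S * (1 - P)) = 0 := by
      rw [Matrix.conjTranspose_mul, hS.1.eq, (MsAux.proj_one_sub hP).1.eq]
      calc (1 - P) * S * (S * (1 - P)) = (1 - P) * ((S * S) * (1 - P)) := by
            simp only [Matrix.mul_assoc]
        _ = 0 := by rw [hSS, hA1P, Matrix.mul_zero]
    exact Matrix.conjTranspose_mul_self_eq_zero.mp hz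
  have hSP : S * P = S := by
    have := hM0
    rw [Matrix.mul_sub, Matrix.mul_one] at this
    exact (sub_eq_zero.mp this).symm
  have hPS : P * S = S := by
    have h' : (S * P)ᴴ = Sᴴ := by rw [hSP]
    rwa [Matrix.conjTranspose_mul, hS.1.eq, hP.1.eq] at h'
  -- T and its properties
  set T : Matrix (Fin d) (Fin d) ℂ := P - S with hTdef
  have hTH : Tᴴ = T := by
    rw [hTdef, Matrix.conjTranspose_sub, hP.1.eq, hS.1.eq]
  have hTT : T * T = P - S - (S - (P - Q)) := by
    rw [hTdef, Matrix.sub_mul, Matrix.mul_sub, Matrix.mul_sub, hP.2, hPS, hSP, hSS]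
  have hQmTT : Q - T * T = (S - S * S) + (S - S * S) := by
    rw [hTT, hSS]
    abel
  -- 1 - S is PSD
  have h1mSS : (1 - S * S).PosSemidef := by
    have e : (1 : Matrix (Fin d) (Fin d) ℂ) - (P - Q) = (1 - P) + Q := by abel
    rw [hSS, e]
    exact (MsAux.proj_psd (MsAux.proj_one_sub hP)).add hQ
  have hone_sub_S : (1 - S).PosSemidef := MsAux.psd_le_one hS h1mSS
  have hSmSS : (S - S * S).PosSemidef := by
    have hW : hS.sqrt * hS.sqrt = S := hS.sqrt_mul_self
    have hWH : hS.sqrtᴴ = hS.sqrt := hS.posSemidef_sqrt.1.eq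
    have hWS : hS.sqrt * S = S * hS.sqrt := by
      have h' : hS.sqrt * (hS.sqrt * hS.sqrt) = hS.sqrt * hS.sqrt * hS.sqrt :=
        (Matrix.mul_assoc _ _ _).symm
      rwa [hW] at h'
    have key : hS.sqrtᴴ * (1 - S) * hS.sqrt = S - S * S := by
      rw [hWH, Matrix.mul_sub, Matrix.mul_one, Matrix.sub_mul, hW, hWS, Matrix.mul_assoc, hW]
    have := hone_sub_S.conjTranspose_mul_mul_same (B := hS.sqrt)
    rwa [key] at this
  have hQmTTpsd : (Q - T * T).PosSemidef := by
    rw [hQmTT]; exact hSmSS.add hSmSS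
  -- the real quantities
  set a : Fin t → ℝ := fun ω => ((σ ω * (T * T)).trace).re with hadef
  set b : Fin t → ℝ := fun ω => ((σ ω * (S * Pi ω * S)).trace).re with hbdef
  have hTTform : T * T = Tᴴ * T := by rw [hTH]
  have ha0 : ∀ ω, 0 ≤ a ω := by
    intro ω
    apply MsAux.trace_mul_psd_re_nonneg (hσ ω).1
    rw [hTTform]
    exact Matrix.posSemidef_conjTranspose_mul_self T
  have hb0 : ∀ ω, 0 ≤ b ω := by
    intro ω
    apply MsAux.trace_mul_psd_re_nonneg (hσ ω).1
    rw [MsAux.sandwich_eq (hPi ω) hS.1.eq]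
    exact Matrix.posSemidef_conjTranspose_mul_self _
  -- per-ω key inequality
  have key : ∀ ω, ((σ ω * (P * Pi ω * P)).trace).re ≤
      (Real.sqrt (a ω) + Real.sqrt (b ω)) ^ 2 := by
    intro ω
    set R := ((hσ ω).1).sqrt with hRdef
    have hc : ((σ ω * (P * Pi ω * P)).trace).re = ‖MsAux.emb (Pi ω * P * R)‖ ^ 2 := by
      rw [MsAux.sandwich_eq (hPi ω) hP.1.eq, MsAux.trace_form (hσ ω).1]
    have haω : a ω = ‖MsAux.emb (T * R)‖ ^ 2 := by
      show ((σ ω * (T * T)).trace).re = _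
      rw [hTTform, MsAux.trace_form (hσ ω).1]
    have hbω : b ω = ‖MsAux.emb (Pi ω * S * R)‖ ^ 2 := by
      show ((σ ω * (S * Pi ω * S)).trace).re = _
      rw [MsAux.sandwich_eq (hPi ω) hS.1.eq, MsAux.trace_form (hσ ω).1]
    have hsplit : Pi ω * P * R = Pi ω * S * R + Pi ω * (T * R) := by
      have hst : S + T = P := by rw [hTdef]; abel
      rw [← hst, Matrix.mul_add, Matrix.add_mul]
      simp only [Matrix.mul_assoc]
    have htri : ‖MsAux.emb (Pi ω * P * R)‖ ≤
        ‖MsAux.emb (Pi ω * S * R)‖ + ‖MsAux.emb (T * R)‖ := by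
      rw [hsplit, MsAux.emb_add]
      refine (norm_add_le _ _).trans ?_
      exact add_le_add le_rfl (MsAux.norm_emb_proj_mul_le (hPi ω) _)
    rw [hc, haω, hbω, Real.sqrt_sq (norm_nonneg _), Real.sqrt_sq (norm_nonneg _)]
    calc ‖MsAux.emb (Pi ω * P * R)‖ ^ 2
        ≤ (‖MsAux.emb (Pi ω * S * R)‖ + ‖MsAux.emb (T * R)‖) ^ 2 := by
          apply pow_le_pow_left₀ (norm_nonneg _) htri
      _ = (‖MsAux.emb (T * R)‖ + ‖MsAux.emb (Pi ω * S * R)‖) ^ 2 := by ring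
  -- global sums
  set X : ℝ := ∑ ω, w ω * a ω with hXdef
  set Y : ℝ := ∑ ω, w ω * b ω with hYdef
  have hX0 : 0 ≤ X := Finset.sum_nonneg fun ω _ => mul_nonneg (hw ω) (ha0 ω)
  have hY0 : 0 ≤ Y := Finset.sum_nonneg fun ω _ => mul_nonneg (hw ω) (hb0 ω)
  have hY : Y ≤ 1 - ε := h1
  have hsum1 : ∑ ω, w ω * ((σ ω * (P * Pi ω * P)).trace).re ≤
      ∑ ω, w ω * (Real.sqrt (a ω) + Real.sqrt (b ω)) ^ 2 :=
    Finset.sum_le_sum fun ω _ => mul_le_mul_of_nonneg_left (key ω) (hw ω)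
  have hterm : ∀ ω, w ω * (Real.sqrt (a ω) + Real.sqrt (b ω)) ^ 2 =
      w ω * a ω + w ω * b ω + 2 * (Real.sqrt (w ω * a ω) * Real.sqrt (w ω * b ω)) := by
    intro ω
    rw [Real.sqrt_mul (hw ω) (a ω), Real.sqrt_mul (hw ω) (b ω), add_sq,
      Real.sq_sqrt (ha0 ω), Real.sq_sqrt (hb0 ω)]
    have hww : Real.sqrt (w ω) * Real.sqrt (w ω) = w ω := Real.mul_self_sqrt (hw ω)
    linear_combination (-(2 * Real.sqrt (a ω) * Real.sqrt (b ω))) * hww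
  have hCS : ∑ ω, Real.sqrt (w ω * a ω) * Real.sqrt (w ω * b ω) ≤
      Real.sqrt X * Real.sqrt Y := by
    rw [hXdef, hYdef]
    exact Real.sum_sqrt_mul_sqrt_le Finset.univ
      (fun ω => mul_nonneg (hw ω) (ha0 ω)) (fun ω => mul_nonneg (hw ω) (hb0 ω))
  have hsum2 : ∑ ω, w ω * (Real.sqrt (a ω) + Real.sqrt (b ω)) ^ 2 ≤
      X + Y + 2 * (Real.sqrt X * Real.sqrt Y) := by
    calc ∑ ω, w ω * (Real.sqrt (a ω) + Real.sqrt (b ω)) ^ 2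
        = ∑ ω, (w ω * a ω + w ω * b ω + 2 * (Real.sqrt (w ω * a ω) * Real.sqrt (w ω * b ω))) :=
          Finset.sum_congr rfl fun ω _ => hterm ω
      _ = X + Y + 2 * ∑ ω, Real.sqrt (w ω * a ω) * Real.sqrt (w ω * b ω) := by
          rw [hXdef, hYdef]
          rw [Finset.sum_add_distrib, Finset.sum_add_distrib, Finset.mul_sum]
      _ ≤ X + Y + 2 * (Real.sqrt X * Real.sqrt Y) := by linarith [hCS]
  have hmain : 1 - η < (Real.sqrt X + Real.sqrt Y) ^ 2 := by
    have : (Real.sqrt X + Real.sqrt Y) ^ 2 = X + Y + 2 * (Real.sqrt X * Real.sqrt Y) := by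
      rw [add_sq, Real.sq_sqrt hX0, Real.sq_sqrt hY0]
      ring
    rw [this]
    calc 1 - η < ∑ ω, w ω * ((σ ω * (P * Pi ω * P)).trace).re := h2
      _ ≤ _ := le_trans hsum1 hsum2
  -- arithmetic endgame
  have hε1 : ε ≤ 1 := by linarith [hY0, hY]
  have hη1 : η < 1 := by linarith
  set u := Real.sqrt (1 - η) with hudef
  set v := Real.sqrt (1 - ε) with hvdef
  set s := Real.sqrt X with hsdef
  have hu2 : u ^ 2 = 1 - η := Real.sq_sqrt (by linarith)
  have hv2 : v ^ 2 = 1 - ε := Real.sq_sqrt (by linarith)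
  have hu0 : 0 ≤ u := Real.sqrt_nonneg _
  have hv0 : 0 ≤ v := Real.sqrt_nonneg _
  have hs0 : 0 ≤ s := Real.sqrt_nonneg _
  have hu1 : u ≤ 1 := by
    rw [hudef]; exact Real.sqrt_le_one.mpr (by linarith)
  have hv1 : v ≤ 1 := by
    rw [hvdef]; exact Real.sqrt_le_one.mpr (by linarith)
  have hvu : v ≤ u := by
    rw [hudef, hvdef]; exact Real.sqrt_le_sqrt (by linarith)
  have hYle : Real.sqrt Y ≤ v := by
    rw [hvdef]; exact Real.sqrt_le_sqrt hY
  have husv : u ≤ s + Real.sqrt Y := by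
    have h' := Real.sqrt_le_sqrt (le_of_lt hmain)
    rw [Real.sqrt_sq (add_nonneg hs0 (Real.sqrt_nonneg Y))] at h'
    rw [hudef]
    exact h'
  have hs_lb : u - v ≤ s := by linarith
  have hexp : (u - v) * (u + v) = ε - η := by linear_combination hu2 - hv2
  have hprod : (u - v) * (u + v) ≤ (u - v) * 2 :=
    mul_le_mul_of_nonneg_left (by linarith) (by linarith)
  have hηuv : η < u - v := by linarith
  have hηs : η ≤ s := by linarith
  have hX_lb : η ^ 2 ≤ X := by
    have hsX : s ^ 2 = X := Real.sq_sqrt hX0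
    have := pow_le_pow_left₀ (le_of_lt hη) hηs 2
    linarith
  -- X is below the Q-trace average
  have hfinal : X ≤ ∑ ω, w ω * ((σ ω * Q).trace).re := by
    rw [hXdef]
    apply Finset.sum_le_sum
    intro ω _
    apply mul_le_mul_of_nonneg_left _ (hw ω)
    have e : T * T + (Q - T * T) = Q := by abel
    have hsplit : ((σ ω * Q).trace).re = a ω + ((σ ω * (Q - T * T)).trace).re := by
      calc ((σ ω * Q).trace).re
          = ((σ ω * (T * T) + σ ω * (Q - T * T)).trace).re := by
            rw [← Matrix.mul_add, e]
        _ = a ω + ((σ ω * (Q - T * T)).trace).re := by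
            rw [Matrix.trace_add, Complex.add_re]
    have hpos : 0 ≤ ((σ ω * (Q - T * T)).trace).re :=
      MsAux.trace_mul_psd_re_nonneg (hσ ω).1 hQmTTpsd
    linarith [hsplit, hpos]
  linarith


end
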